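/- Let Δt > 0 and M, c, C₀ > 0. Let θ : ℝ² → ℝ be C¹ and ℤ²-periodic, and let p : ℝ² → ℝ² be C¹ and ℤ²-periodic with |p(x)| ≤ M for all x. Suppose that for every z ∈ [0,1] the map F_z(x) = x − z Δt p(x) is a ℤ²-equivariant C¹ diffeomorphism whose Jacobian determinant δ_z(x) = det(DF_z(x)) satisfies δ_z(x) ≥ c for all x, and suppose moreover that δ₁(x) ≤ C₀ for all x. Then ∫_Q (θ(x) − θ(x − Δt p(x)))² δ₁(x) dx ≤ (C₀ M² Δt² / c) ∫_Q |∇θ(x)|² dx, where Q = [0,1]². -/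

import Mathlib

open MeasureTheory

noncomputable section

abbrev E2 : Type := EuclideanSpace ℝ (Fin 2)

/-- The unit fundamental domain `Q = [0,1]²`. -/
def Q : Set E2 := {x | ∀ i, x i ∈ Set.Icc (0:ℝ) 1}

/-- The vector in `ℝ²` with integer coordinates `k`. -/
def intVec (k : Fin 2 → ℤ) : E2 := WithLp.toLp 2 (fun i => (k i : ℝ))

def bE : Module.Basis (Fin 2) ℝ E2 := Module.Basis.ofEquivFun (WithLp.linearEquiv 2 ℝ (Fin 2 → ℝ))

lemma bE_repr (x : E2) (i : Fin 2) : bE.repr x i = x i := by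
  rw [bE, Module.Basis.ofEquivFun_repr_apply]; rfl

def Λ : AddSubgroup E2 := (Submodule.span ℤ (Set.range ⇑bE)).toAddSubgroup

lemma mem_latt {γ : E2} (h : γ ∈ Λ) : ∃ k : Fin 2 → ℤ, γ = intVec k := by
  obtain ⟨c, hc⟩ := (Submodule.mem_span_range_iff_exists_fun ℤ).1 h
  refine ⟨c, ?_⟩
  have : ∀ j, bE.repr γ j = (c j : ℝ) := by
    intro j
    rw [← hc]
    have : bE.repr (∑ i, c i • bE i) = ∑ i, c i • bE.repr (bE i) := by
      rw [map_sum]; simp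
    rw [this]
    simp only [Module.Basis.repr_self, Finsupp.coe_smul, Finsupp.coe_finset_sum, Finset.sum_apply,
      Pi.smul_apply, Finsupp.single_apply, Fin.sum_univ_two]
    fin_cases j <;> simp
  ext j
  have h2 := this j
  rw [bE_repr] at h2
  rw [h2]; rfl

lemma D_eq : ZSpan.fundamentalDomain bE = {x : E2 | ∀ i, x i ∈ Set.Ico (0:ℝ) 1} := by
  ext x; simp [ZSpan.mem_fundamentalDomain, bE_repr]

lemma Q_eq_parallelepiped : Q = parallelepiped ⇑bE := by
  rw [parallelepiped_basis_eq]
  ext x; simp [Q, bE_repr]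

lemma Q_ae : (Q : Set E2) =ᵐ[volume] ZSpan.fundamentalDomain bE := by
  rw [Q_eq_parallelepiped]
  exact (ZSpan.fundamentalDomain_ae_parallelepiped bE volume).symm

lemma D_subset_Q : ZSpan.fundamentalDomain bE ⊆ Q := by
  rw [D_eq]; intro x hx i; exact ⟨(hx i).1, le_of_lt (hx i).2⟩

lemma isCompact_Q : IsCompact Q := by
  have : Q = WithLp.toLp 2 '' Set.pi Set.univ (fun _ : Fin 2 => Set.Icc (0:ℝ) 1) := by
    ext x; constructor
    · intro h; exact ⟨WithLp.ofLp x, fun i _ => h i, by simp⟩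
    · rintro ⟨y, hy, rfl⟩ i; exact hy i trivial
  rw [this]
  exact (isCompact_univ_pi fun _ => isCompact_Icc).image (PiLp.continuous_toLp 2 _)

lemma image_null {f : E2 → E2} (hf : Differentiable ℝ f) {A : Set E2}
    (hA : MeasurableSet A) (h0 : volume A = 0) : volume (f '' A) = 0 := by
  refine le_antisymm ?_ zero_le
  calc volume (f '' A)
      ≤ ∫⁻ x in A, ENNReal.ofReal |(fderiv ℝ f x).det| ∂volume :=
        addHaar_image_le_lintegral_abs_det_fderiv volume hA
          (fun x _ => (hf x).hasFDerivAt.hasFDerivWithinAt)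
    _ = 0 := setLIntegral_measure_zero _ _ h0

instance : Countable Λ := inferInstanceAs (Countable (Submodule.span ℤ (Set.range ⇑bE)))
example : MeasurableVAdd Λ E2 := inferInstance
example : VAddInvariantMeasure Λ E2 volume := inferInstance

lemma hD : IsAddFundamentalDomain Λ (ZSpan.fundamentalDomain bE) volume :=
  ZSpan.isAddFundamentalDomain' bE volume

lemma fund_image {F : E2 → E2} (hFc : ContDiff ℝ 1 F) (hbij : Function.Bijective F)
    (heq : ∀ (x : E2) (k : Fin 2 → ℤ), F (x + intVec k) = F x + intVec k) :
    IsAddFundamentalDomain Λ (F '' (ZSpan.fundamentalDomain bE)) volume := by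
  set e : E2 ≃ E2 := Equiv.ofBijective F hbij with he
  have hFe : ⇑e = F := rfl
  have hemb : MeasurableEmbedding F := hFc.continuous.measurableEmbedding hbij.1
  have hpre : ∀ s : Set E2, e.symm ⁻¹' s = F '' s := by
    intro s; rw [← Equiv.image_eq_preimage_symm, hFe]
  have hmeas : Measurable ⇑e.symm := fun s hs => by
    rw [hpre]; exact hemb.measurableSet_image.2 hs
  have hqmp : Measure.QuasiMeasurePreserving ⇑e.symm volume volume := by
    refine ⟨hmeas, Measure.AbsolutelyContinuous.mk fun s hs h0 => ?_⟩
    rw [Measure.map_apply hmeas hs, hpre]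
    exact image_null (hFc.differentiable one_ne_zero) hs h0
  have hef : ∀ γ : Λ, Function.Semiconj ⇑e ((Equiv.refl Λ) γ +ᵥ ·) (γ +ᵥ ·) := by
    intro γ x
    obtain ⟨k, hk⟩ := mem_latt γ.2
    show F (↑γ + x) = ↑γ + F x
    rw [hk, add_comm (intVec k) x, heq, add_comm]
  have h := hD.image_of_equiv e hqmp (Equiv.refl Λ) hef
  rwa [hFe] at h

lemma fderiv_periodic {θ : E2 → ℝ} (hθ : ContDiff ℝ 1 θ)
    (hθper : ∀ (x : E2) (k : Fin 2 → ℤ), θ (x + intVec k) = θ x) (x : E2) (k : Fin 2 → ℤ) :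
    fderiv ℝ θ (x + intVec k) = fderiv ℝ θ x := by
  have hdiff := hθ.differentiable one_ne_zero
  have hg : HasFDerivAt (fun y : E2 => y + intVec k)
      (ContinuousLinearMap.id ℝ E2) x := (hasFDerivAt_id x).add_const _
  have hcomp : HasFDerivAt (fun y => θ (y + intVec k))
      ((fderiv ℝ θ (x + intVec k)).comp (ContinuousLinearMap.id ℝ E2)) x :=
    (hdiff (x + intVec k)).hasFDerivAt.comp x hg
  have heq : (fun y : E2 => θ (y + intVec k)) = θ := funext fun y => hθper y k
  rw [heq, ContinuousLinearMap.comp_id] at hcomp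
  exact (hcomp.fderiv).symm

lemma sq_integral_le (μ : Measure ℝ) [IsProbabilityMeasure μ] {h : ℝ → ℝ}
    (h1 : Integrable h μ) (h2 : Integrable (fun z => h z ^ 2) μ) :
    (∫ z, h z ∂μ) ^ 2 ≤ ∫ z, h z ^ 2 ∂μ := by
  set I := ∫ z, h z ∂μ with hI
  have e0 : 0 ≤ ∫ z, (h z - I) ^ 2 ∂μ := integral_nonneg fun z => sq_nonneg _
  have expand : (fun z => (h z - I) ^ 2) = fun z => h z ^ 2 - (2 * I) * h z + I ^ 2 :=
    funext fun z => by ring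
  have ha : Integrable (fun z => h z ^ 2 - 2 * I * h z) μ := h2.sub (h1.const_mul _)
  have hb : Integrable (fun _ : ℝ => I ^ 2) μ := integrable_const _
  rw [expand, integral_add ha hb, integral_sub h2 (h1.const_mul _),
    integral_const_mul, integral_const] at e0
  simp only [probReal_univ, ENNReal.toReal_one, smul_eq_mul, one_mul, ← hI] at e0
  nlinarith [e0]

instance : IsProbabilityMeasure (volume.restrict (Set.Ioc (0:ℝ) 1)) := by
  constructor
  rw [Measure.restrict_apply_univ]
  simp [Real.volume_Ioc]

lemma pointwise_est (Δt M : ℝ) (hΔt : 0 < Δt) (hM : 0 < M) (θ : E2 → ℝ) (p : E2 → E2)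
    (hθ : ContDiff ℝ 1 θ) (hp : ContDiff ℝ 1 p) (hpbdd : ∀ x, ‖p x‖ ≤ M) (x : E2) :
    (θ x - θ (x - Δt • p x)) ^ 2
      ≤ M ^ 2 * Δt ^ 2 * ∫ z in Set.Ioc (0:ℝ) 1, ‖fderiv ℝ θ (x - (z * Δt) • p x)‖ ^ 2 := by
  set v := Δt • p x with hv
  have hvn : ‖v‖ ≤ Δt * M := by
    rw [hv, norm_smul, Real.norm_eq_abs, abs_of_pos hΔt]
    exact mul_le_mul_of_nonneg_left (hpbdd x) hΔt.le
  have hψ : ∀ z : ℝ, x - z • v = x - (z * Δt) • p x := fun z => by rw [hv, smul_smul]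
  have hdθ := hθ.differentiable one_ne_zero
  have hder : ∀ z : ℝ, HasDerivAt (fun t : ℝ => θ (x - t • v))
      ((fderiv ℝ θ (x - z • v)) (-v)) z := by
    intro z
    have h1 : HasDerivAt (fun t : ℝ => x - t • v) (-v) z := by
      have h2 : HasDerivAt (fun t : ℝ => t • v) ((1:ℝ) • v) z := (hasDerivAt_id z).smul_const v
      simpa using h2.const_sub x
    exact (hdθ _).hasFDerivAt.comp_hasDerivAt z h1
  have hcder : Continuous fun z : ℝ => ‖fderiv ℝ θ (x - z • v)‖ := by
    have hc0 : Continuous fun z : ℝ => x - z • v := continuous_const.sub (continuous_id.smul continuous_const)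
    exact ((hθ.continuous_fderiv one_ne_zero).comp hc0).norm
  have hcint : Continuous fun z : ℝ => (fderiv ℝ θ (x - z • v)) (-v) := by
    have hc0 : Continuous fun z : ℝ => x - z • v := continuous_const.sub (continuous_id.smul continuous_const)
    exact ((hθ.continuous_fderiv one_ne_zero).comp hc0).clm_apply continuous_const
  have hFTC : ∫ z in (0:ℝ)..1, (fderiv ℝ θ (x - z • v)) (-v) = θ (x - v) - θ x := by
    have h := intervalIntegral.integral_eq_sub_of_hasDerivAt (f := fun t : ℝ => θ (x - t • v))
      (fun z _ => hder z) (hcint.intervalIntegrable 0 1)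
    simpa using h
  have habs : |θ x - θ (x - v)| ≤ ∫ z in (0:ℝ)..1, ‖fderiv ℝ θ (x - z • v)‖ * ‖v‖ := by
    have h3 : θ x - θ (x - v) = ∫ z in (0:ℝ)..1, -((fderiv ℝ θ (x - z • v)) (-v)) := by
      rw [intervalIntegral.integral_neg, hFTC]; ring
    rw [h3]
    calc |∫ z in (0:ℝ)..1, -((fderiv ℝ θ (x - z • v)) (-v))|
        ≤ ∫ z in (0:ℝ)..1, |-((fderiv ℝ θ (x - z • v)) (-v))| :=
          intervalIntegral.abs_integral_le_integral_abs zero_le_one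
      _ ≤ ∫ z in (0:ℝ)..1, ‖fderiv ℝ θ (x - z • v)‖ * ‖v‖ := by
          apply intervalIntegral.integral_mono_on zero_le_one
            (hcint.neg.abs.intervalIntegrable 0 1)
            ((hcder.mul continuous_const).intervalIntegrable 0 1)
          intro z _
          show |-((fderiv ℝ θ (x - z • v)) (-v))| ≤ ‖fderiv ℝ θ (x - z • v)‖ * ‖v‖
          rw [abs_neg]
          calc |(fderiv ℝ θ (x - z • v)) (-v)| ≤ ‖fderiv ℝ θ (x - z • v)‖ * ‖-v‖ :=
                (fderiv ℝ θ (x - z • v)).le_opNorm (-v)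
            _ = ‖fderiv ℝ θ (x - z • v)‖ * ‖v‖ := by rw [norm_neg]
  have hsq : (θ x - θ (x - v)) ^ 2 ≤ (∫ z in (0:ℝ)..1, ‖fderiv ℝ θ (x - z • v)‖ * ‖v‖) ^ 2 := by
    rw [← sq_abs]
    exact pow_le_pow_left₀ (abs_nonneg _) habs 2
  have hconv : ∫ z in (0:ℝ)..1, ‖fderiv ℝ θ (x - z • v)‖ * ‖v‖
      = (∫ z in Set.Ioc (0:ℝ) 1, ‖fderiv ℝ θ (x - z • v)‖) * ‖v‖ := by
    rw [intervalIntegral.integral_of_le zero_le_one, integral_mul_const]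
  have hCS : (∫ z in Set.Ioc (0:ℝ) 1, ‖fderiv ℝ θ (x - z • v)‖) ^ 2
      ≤ ∫ z in Set.Ioc (0:ℝ) 1, ‖fderiv ℝ θ (x - z • v)‖ ^ 2 := by
    apply sq_integral_le
    · exact hcder.integrableOn_Ioc
    · exact (hcder.pow 2).integrableOn_Ioc
  have hInn : 0 ≤ ∫ z in Set.Ioc (0:ℝ) 1, ‖fderiv ℝ θ (x - z • v)‖ ^ 2 :=
    integral_nonneg fun z => sq_nonneg _
  have hvsq : ‖v‖ ^ 2 ≤ (Δt * M) ^ 2 := pow_le_pow_left₀ (norm_nonneg v) hvn 2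
  calc (θ x - θ (x - Δt • p x)) ^ 2
      = (θ x - θ (x - v)) ^ 2 := by rw [hv]
    _ ≤ (∫ z in (0:ℝ)..1, ‖fderiv ℝ θ (x - z • v)‖ * ‖v‖) ^ 2 := hsq
    _ = (∫ z in Set.Ioc (0:ℝ) 1, ‖fderiv ℝ θ (x - z • v)‖) ^ 2 * ‖v‖ ^ 2 := by
        rw [hconv]; ring
    _ ≤ (∫ z in Set.Ioc (0:ℝ) 1, ‖fderiv ℝ θ (x - z • v)‖ ^ 2) * (Δt * M) ^ 2 := by
        apply mul_le_mul hCS hvsq (sq_nonneg _) hInn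
    _ = M ^ 2 * Δt ^ 2 * ∫ z in Set.Ioc (0:ℝ) 1, ‖fderiv ℝ θ (x - (z * Δt) • p x)‖ ^ 2 := by
        simp only [hψ]; ring

lemma per_z (Δt c : ℝ) (hc : 0 < c) (θ : E2 → ℝ) (p : E2 → E2)
    (hθ : ContDiff ℝ 1 θ)
    (hθper : ∀ (x : E2) (k : Fin 2 → ℤ), θ (x + intVec k) = θ x)
    (hp : ContDiff ℝ 1 p) (z : ℝ)
    (hbij : Function.Bijective (fun x : E2 => x - (z * Δt) • p x))
    (heq : ∀ (x : E2) (k : Fin 2 → ℤ),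
      (x + intVec k) - (z * Δt) • p (x + intVec k) = (x - (z * Δt) • p x) + intVec k)
    (hdet : ∀ x : E2, c ≤ (fderiv ℝ (fun y : E2 => y - (z * Δt) • p y) x).det) :
    ∫ x in Q, ‖fderiv ℝ θ (x - (z * Δt) • p x)‖ ^ 2
      ≤ (1 / c) * ∫ x in Q, ‖fderiv ℝ θ x‖ ^ 2 := by
  set F : E2 → E2 := fun x => x - (z * Δt) • p x with hF
  set g : E2 → ℝ := fun y => ‖fderiv ℝ θ y‖ ^ 2 with hg
  set D : Set E2 := ZSpan.fundamentalDomain bE with hDdef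
  have hFc : ContDiff ℝ 1 F := contDiff_id.sub (hp.const_smul _)
  have hgc : Continuous g := ((hθ.continuous_fderiv one_ne_zero).norm.pow 2)
  have hdetc : Continuous fun x : E2 => (fderiv ℝ F x).det :=
    ContinuousLinearMap.continuous_det.comp (hFc.continuous_fderiv one_ne_zero)
  have hDmeas : MeasurableSet D := ZSpan.fundamentalDomain_measurableSet bE
  have hgnn : ∀ y, 0 ≤ g y := fun y => sq_nonneg _
  have hdetpos : ∀ x, 0 < (fderiv ℝ F x).det := fun x => lt_of_lt_of_le hc (hdet x)
  have hint1 : IntegrableOn (fun x => g (F x)) D :=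
    ((hgc.comp hFc.continuous).continuousOn.integrableOn_compact isCompact_Q).mono_set
      D_subset_Q
  have hint2 : IntegrableOn (fun x => (1 / c) * (|(fderiv ℝ F x).det| • g (F x))) D := by
    refine (ContinuousOn.integrableOn_compact isCompact_Q ?_).mono_set D_subset_Q
    exact (continuous_const.mul (hdetc.abs.mul (hgc.comp hFc.continuous))).continuousOn
  have ginv : ∀ (γ : Λ) (y : E2), g (γ +ᵥ y) = g y := by
    intro γ y
    obtain ⟨k, hk⟩ := mem_latt γ.2
    show g (↑γ + y) = g y
    rw [hk, add_comm, hg]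
    simp only [fderiv_periodic hθ hθper]
  calc ∫ x in Q, ‖fderiv ℝ θ (x - (z * Δt) • p x)‖ ^ 2
      = ∫ x in D, g (F x) := setIntegral_congr_set Q_ae
    _ ≤ ∫ x in D, (1 / c) * (|(fderiv ℝ F x).det| • g (F x)) := by
        refine setIntegral_mono_on hint1 hint2 hDmeas fun x _ => ?_
        rw [abs_of_pos (hdetpos x), smul_eq_mul]
        rw [div_mul_eq_mul_div, le_div_iff₀ hc, mul_comm (g (F x)) c]
        exact mul_le_mul_of_nonneg_right (hdet x) (hgnn _) |>.trans_eq (by ring)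
    _ = (1 / c) * ∫ x in D, |(fderiv ℝ F x).det| • g (F x) := integral_const_mul _ _
    _ = (1 / c) * ∫ y in F '' D, g y := by
        rw [integral_image_eq_integral_abs_det_fderiv_smul volume hDmeas
          (fun x _ => ((hFc.differentiable one_ne_zero) x).hasFDerivAt.hasFDerivWithinAt)
          hbij.1.injOn g]
    _ = (1 / c) * ∫ y in D, g y := by
        rw [(fund_image hFc hbij heq).setIntegral_eq hD ginv]
    _ = (1 / c) * ∫ x in Q, ‖fderiv ℝ θ x‖ ^ 2 := by
        rw [setIntegral_congr_set Q_ae.symm]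

/-- Weighted characteristic-difference estimate: with `F_z(x) = x − zΔt p(x)` a
`ℤ²`-equivariant `C¹` diffeomorphism for each `z ∈ [0,1]`, with Jacobian determinant
`δ_z ≥ c > 0` and `δ₁ ≤ C₀`, and `|p| ≤ M`,
`∫_Q (θ(x) − θ(x − Δt p(x)))² δ₁(x) dx ≤ (C₀ M² Δt² / c) ∫_Q |∇θ|² dx`. -/
theorem weighted_characteristic_difference_estimate
    (Δt M c C₀ : ℝ) (hΔt : 0 < Δt) (hM : 0 < M) (hc : 0 < c) (hC₀ : 0 < C₀)
    (θ : E2 → ℝ) (p : E2 → E2)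
    (hθ : ContDiff ℝ 1 θ)
    (hθper : ∀ (x : E2) (k : Fin 2 → ℤ), θ (x + intVec k) = θ x)
    (hp : ContDiff ℝ 1 p)
    (hpper : ∀ (x : E2) (k : Fin 2 → ℤ), p (x + intVec k) = p x)
    (hpbdd : ∀ x : E2, ‖p x‖ ≤ M)
    (hdiffeo : ∀ z ∈ Set.Icc (0:ℝ) 1,
      Function.Bijective (fun x : E2 => x - (z * Δt) • p x))
    (hequiv : ∀ z ∈ Set.Icc (0:ℝ) 1, ∀ (x : E2) (k : Fin 2 → ℤ),
      (x + intVec k) - (z * Δt) • p (x + intVec k)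
        = (x - (z * Δt) • p x) + intVec k)
    (hdetlb : ∀ z ∈ Set.Icc (0:ℝ) 1, ∀ x : E2,
      c ≤ (fderiv ℝ (fun y : E2 => y - (z * Δt) • p y) x).det)
    (hdetub : ∀ x : E2, (fderiv ℝ (fun y : E2 => y - Δt • p y) x).det ≤ C₀) :
    ∫ x in Q, (θ x - θ (x - Δt • p x)) ^ 2
        * (fderiv ℝ (fun y : E2 => y - Δt • p y) x).det
      ≤ (C₀ * M ^ 2 * Δt ^ 2 / c) * ∫ x in Q, ‖fderiv ℝ θ x‖ ^ 2 := by
  have hdet1lb : ∀ x : E2, c ≤ (fderiv ℝ (fun y : E2 => y - Δt • p y) x).det := by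
    intro x
    have h := hdetlb 1 ⟨zero_le_one, le_rfl⟩ x
    simp only [one_mul] at h
    exact h
  set g : E2 → ℝ := fun y => ‖fderiv ℝ θ y‖ ^ 2 with hg
  have hjoint : Continuous fun q : E2 × ℝ => g (q.1 - (q.2 * Δt) • p q.1) := by
    have h1 : Continuous fun q : E2 × ℝ => q.1 - (q.2 * Δt) • p q.1 :=
      continuous_fst.sub ((continuous_snd.mul continuous_const).smul
        (hp.continuous.comp continuous_fst))
    exact ((hθ.continuous_fderiv one_ne_zero).norm.pow 2).comp h1
  have hprod : Integrable (Function.uncurry fun (x : E2) (z : ℝ) => g (x - (z * Δt) • p x))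
      ((volume.restrict Q).prod (volume.restrict (Set.Ioc (0:ℝ) 1))) := by
    rw [Measure.prod_restrict]
    exact (hjoint.continuousOn.integrableOn_compact (isCompact_Q.prod isCompact_Icc)).mono_set
      (Set.prod_mono_right Set.Ioc_subset_Icc_self)
  have hmar1 : Integrable (fun x => ∫ z in Set.Ioc (0:ℝ) 1, g (x - (z * Δt) • p x))
      (volume.restrict Q) := hprod.integral_prod_left
  have hmar2 : Integrable (fun z => ∫ x in Q, g (x - (z * Δt) • p x))
      (volume.restrict (Set.Ioc (0:ℝ) 1)) := hprod.integral_prod_right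
  have hpt : ∀ x : E2, (θ x - θ (x - Δt • p x)) ^ 2
        * (fderiv ℝ (fun y : E2 => y - Δt • p y) x).det
      ≤ (M ^ 2 * Δt ^ 2 * ∫ z in Set.Ioc (0:ℝ) 1, g (x - (z * Δt) • p x)) * C₀ := by
    intro x
    have h1 := pointwise_est Δt M hΔt hM θ p hθ hp hpbdd x
    have h2 : (0:ℝ) ≤ (fderiv ℝ (fun y : E2 => y - Δt • p y) x).det :=
      le_trans hc.le (hdet1lb x)
    have h3 : (0:ℝ) ≤ M ^ 2 * Δt ^ 2 * ∫ z in Set.Ioc (0:ℝ) 1, g (x - (z * Δt) • p x) :=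
      mul_nonneg (by positivity) (integral_nonneg fun z => sq_nonneg _)
    exact mul_le_mul h1 (hdetub x) h2 h3
  have hF1c : ContDiff ℝ 1 (fun y : E2 => y - Δt • p y) := contDiff_id.sub (hp.const_smul _)
  have hLint : IntegrableOn (fun x : E2 => (θ x - θ (x - Δt • p x)) ^ 2
      * (fderiv ℝ (fun y : E2 => y - Δt • p y) x).det) Q := by
    refine (ContinuousOn.integrableOn_compact isCompact_Q ?_)
    exact (((hθ.continuous.sub (hθ.continuous.comp hF1c.continuous)).pow 2).mul
      (ContinuousLinearMap.continuous_det.comp (hF1c.continuous_fderiv one_ne_zero))).continuousOn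
  have hRint : IntegrableOn (fun x : E2 =>
      (M ^ 2 * Δt ^ 2 * ∫ z in Set.Ioc (0:ℝ) 1, g (x - (z * Δt) • p x)) * C₀) Q :=
    (hmar1.const_mul _).mul_const _
  have hrw : ∀ x : E2, (M ^ 2 * Δt ^ 2 * ∫ z in Set.Ioc (0:ℝ) 1, g (x - (z * Δt) • p x)) * C₀
      = (C₀ * M ^ 2 * Δt ^ 2) * ∫ z in Set.Ioc (0:ℝ) 1, g (x - (z * Δt) • p x) :=
    fun x => by ring
  calc ∫ x in Q, (θ x - θ (x - Δt • p x)) ^ 2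
        * (fderiv ℝ (fun y : E2 => y - Δt • p y) x).det
      ≤ ∫ x in Q, (M ^ 2 * Δt ^ 2 * ∫ z in Set.Ioc (0:ℝ) 1, g (x - (z * Δt) • p x)) * C₀ :=
        integral_mono hLint hRint hpt
    _ = (C₀ * M ^ 2 * Δt ^ 2) * ∫ x in Q, ∫ z in Set.Ioc (0:ℝ) 1, g (x - (z * Δt) • p x) := by
        simp only [hrw]
        rw [integral_const_mul]
    _ = (C₀ * M ^ 2 * Δt ^ 2) * ∫ z in Set.Ioc (0:ℝ) 1, ∫ x in Q, g (x - (z * Δt) • p x) := by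
        rw [integral_integral_swap hprod]
    _ ≤ (C₀ * M ^ 2 * Δt ^ 2) * ((1 / c) * ∫ x in Q, g x) := by
        refine mul_le_mul_of_nonneg_left ?_ (by positivity)
        have hb : ∫ z in Set.Ioc (0:ℝ) 1, ∫ x in Q, g (x - (z * Δt) • p x)
            ≤ ∫ _ in Set.Ioc (0:ℝ) 1, ((1 / c) * ∫ x in Q, g x) := by
          refine setIntegral_mono_on hmar2
            (integrableOn_const (by simp [Real.volume_Ioc])) measurableSet_Ioc ?_
          intro z hz
          exact per_z Δt c hc θ p hθ hθper hp z (hdiffeo z ⟨hz.1.le, hz.2⟩)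
            (hequiv z ⟨hz.1.le, hz.2⟩) (hdetlb z ⟨hz.1.le, hz.2⟩)
        refine hb.trans_eq ?_
        rw [setIntegral_const]
        simp [Real.volume_real_Ioc_of_le]
    _ = (C₀ * M ^ 2 * Δt ^ 2 / c) * ∫ x in Q, ‖fderiv ℝ θ x‖ ^ 2 := by
        rw [hg]; ring
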